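/- The destandardization map dst: SSYT_n(λ) → QYT_{≤n}(λ) is injective if and only if n ≤ ℓ(λ). -/

import Mathlib

open YoungDiagram

/-- Entries of `T` are all `< m`.  Entries are 0-based: the value `v` represents the
positive integer `v + 1`, so this says all (1-based) entries are at most `m`. -/
def EntryLE (μ : YoungDiagram) (T : SemistandardYoungTableau μ) (m : ℕ) : Prop :=
  ∀ i j : ℕ, (i, j) ∈ μ → T i j < m

/-- `T` is quasi-Yamanouchi: whenever a value `v > 0` appears, the leftmost
occurrence of `v` is weakly left of some occurrence of `v - 1`; equivalently some
occurrence of `v` is weakly left of some occurrence of `v - 1`. -/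
def IsQY (μ : YoungDiagram) (T : SemistandardYoungTableau μ) : Prop :=
  ∀ v : ℕ, 0 < v → (∃ i j : ℕ, (i, j) ∈ μ ∧ T i j = v) →
    ∃ i j i' j' : ℕ, (i, j) ∈ μ ∧ (i', j') ∈ μ ∧ T i j = v ∧ T i' j' = v - 1 ∧ j ≤ j'

/-- The maximum (1-based) entry of `T` is exactly `m`: all entries are `< m`
(0-based) and the value `m - 1` appears. -/
def MaxEq (μ : YoungDiagram) (T : SemistandardYoungTableau μ) (m : ℕ) : Prop :=
  EntryLE μ T m ∧ ∃ i j : ℕ, (i, j) ∈ μ ∧ T i j = m - 1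

/-- The number of quasi-Yamanouchi tableaux of shape `μ` with maximum entry exactly `m`. -/
noncomputable def QYTeq (μ : YoungDiagram) (m : ℕ) : ℕ :=
  Nat.card {T : SemistandardYoungTableau μ // IsQY μ T ∧ MaxEq μ T m}

/-- The number of semistandard Young tableaux of shape `μ` with entries at most `m`. -/
noncomputable def SSYTle (μ : YoungDiagram) (m : ℕ) : ℕ :=
  Nat.card {T : SemistandardYoungTableau μ // EntryLE μ T m}

/-- `T` is a standard Young tableau: each of the values `0, …, μ.card - 1`
(representing `1, …, n`) appears exactly once. -/
def IsSYT (μ : YoungDiagram) (T : SemistandardYoungTableau μ) : Prop :=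
  ∀ v : ℕ, v < μ.card → ∃! p : ℕ × ℕ, p ∈ μ ∧ T p.1 p.2 = v

/-- The number of standard Young tableaux of shape `μ`. -/
noncomputable def SYTcount (μ : YoungDiagram) : ℕ :=
  Nat.card {T : SemistandardYoungTableau μ // IsSYT μ T}

/-- The descent set of a standard tableau, in the paper's 1-based labelling:
`d ∈ Des T` iff `1 ≤ d ≤ n - 1` and the (1-based) entry `d + 1` (0-based value `d`)
appears weakly left of the (1-based) entry `d` (0-based value `d - 1`). -/
def Des (μ : YoungDiagram) (T : SemistandardYoungTableau μ) : Set ℕ :=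
  {d | 1 ≤ d ∧ d ≤ μ.card - 1 ∧
    ∃ i j i' j' : ℕ, (i, j) ∈ μ ∧ (i', j') ∈ μ ∧ T i j = d ∧ T i' j' = d - 1 ∧ j ≤ j'}

/-- One destandardization step at value `v`: every occurrence of `v` lies strictly
right of every occurrence of `v - 1` (in particular vacuously if no `v - 1` appears),
and `T'` is obtained from `T` by decrementing every entry equal to `v` to `v - 1`. -/
def StepAt (μ : YoungDiagram) (T T' : SemistandardYoungTableau μ) (v : ℕ) : Prop :=
  0 < v ∧ (∃ i j : ℕ, (i, j) ∈ μ ∧ T i j = v) ∧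
    (∀ i j i' j' : ℕ, (i, j) ∈ μ → (i', j') ∈ μ → T i j = v → T i' j' = v - 1 → j' < j) ∧
    (∀ i j : ℕ, (i, j) ∈ μ → T' i j = if T i j = v then v - 1 else T i j)

/-- One destandardization step (at some value). -/
def Step (μ : YoungDiagram) (T T' : SemistandardYoungTableau μ) : Prop :=
  ∃ v : ℕ, StepAt μ T T' v

/-- `Q` is the destandardization of `T`: it is reachable from `T` by destandardization
steps and no further step applies to it. -/
def IsDst (μ : YoungDiagram) (T Q : SemistandardYoungTableau μ) : Prop :=
  Relation.ReflTransGen (Step μ) T Q ∧ ∀ Q' : SemistandardYoungTableau μ, ¬ Step μ Q Q'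

/-- The hook length of the box in row `i`, column `j` of `μ`. -/
def hookLength (μ : YoungDiagram) (i j : ℕ) : ℕ :=
  (μ.rowLen i - j) + (μ.colLen j - i) - 1

/-- The hook-content product `∏_{u ∈ μ} (k + c(u)) / h(u)` where `c(u)` is the
content (column minus row) and `h(u)` the hook length. -/
noncomputable def hookContent (μ : YoungDiagram) (k : ℕ) : ℚ :=
  ∏ c ∈ μ.cells, ((k : ℚ) + (c.2 : ℚ) - (c.1 : ℚ)) / (hookLength μ c.1 c.2 : ℚ)

/-- `μ` is the partition `(l1, l2, 2^{h2-2}, 1^{h1-h2})`: first row `l1`, second row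
`l2`, rows `2, …, h2 - 1` of length `2`, rows `h2, …, h1 - 1` of length `1`, and no
other rows; so the first column has height `h1` and the second column height `h2`. -/
def HasRows2 (μ : YoungDiagram) (l1 l2 h1 h2 : ℕ) : Prop :=
  μ.rowLen 0 = l1 ∧ μ.rowLen 1 = l2 ∧
    (∀ i : ℕ, 2 ≤ i → i < h2 → μ.rowLen i = 2) ∧
    (∀ i : ℕ, h2 ≤ i → i < h1 → μ.rowLen i = 1) ∧
    (∀ i : ℕ, h1 ≤ i → μ.rowLen i = 0)


/-- Column-0 gap lemma: entries in the first column grow at least by 1 per row. -/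
lemma colGap (μ : YoungDiagram) (T : SemistandardYoungTableau μ) :
    ∀ k i : ℕ, (i + k, 0) ∈ μ → T i 0 + k ≤ T (i + k) 0 := by
  intro k
  induction k with
  | zero => intro i _; simp
  | succ k ih =>
    intro i hmem
    have h1 : (i + k, 0) ∈ μ := μ.up_left_mem (by omega) le_rfl hmem
    have h2 := T.col_strict (show i + k < i + (k + 1) by omega) hmem
    have := ih i h1
    omega

/-- If `T` equals `i` everywhere in column 0 (for rows in `μ`), all entries are
`< colLen 0`, and every value occurring occurs in column 0 too, then no step applies. -/
lemma noStepLemma (μ : YoungDiagram) (T : SemistandardYoungTableau μ)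
    (hT : ∀ i : ℕ, i < μ.colLen 0 → T i 0 = i)
    (hlt : ∀ i j : ℕ, (i, j) ∈ μ → T i j < μ.colLen 0) :
    ∀ Q' : SemistandardYoungTableau μ, ¬ Step μ T Q' := by
  rintro Q' ⟨v, hv, ⟨i, j, hij, hTij⟩, hsep, _⟩
  have hvlt : v < μ.colLen 0 := hTij ▸ hlt i j hij
  have hv0 : (v, 0) ∈ μ := YoungDiagram.mem_iff_lt_colLen.2 hvlt
  have hv1 : (v - 1, 0) ∈ μ := YoungDiagram.mem_iff_lt_colLen.2 (by omega)
  have := hsep v 0 (v - 1) 0 hv0 hv1 (hT v hvlt) (hT (v - 1) (by omega))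
  omega

/-- If no step applies to `T`, then `IsDst μ T Q` forces `Q = T`. -/
lemma dst_eq_self (μ : YoungDiagram) (T Q : SemistandardYoungTableau μ)
    (hno : ∀ Q' : SemistandardYoungTableau μ, ¬ Step μ T Q')
    (h : IsDst μ T Q) : Q = T := by
  rcases h.1.cases_head with h | ⟨c, hc, _⟩
  · exact h.symm
  · exact absurd hc (hno c)

/-- The destandardization map `dst : SSYT_n(λ) → QYT_{≤n}(λ)` is
injective if and only if `n ≤ ℓ(λ)`. -/
theorem dst_injective_iff (μ : YoungDiagram) (hμ : 0 < μ.card) (n : ℕ) :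
    (∀ T1 T2 Q : SemistandardYoungTableau μ, EntryLE μ T1 n → EntryLE μ T2 n →
      IsDst μ T1 Q → IsDst μ T2 Q → T1 = T2) ↔ n ≤ μ.colLen 0 := by
  constructor
  · -- injectivity → n ≤ colLen 0
    intro hinj
    by_contra hn
    push_neg at hn
    set c := μ.colLen 0 with hc
    have h00 : (0, 0) ∈ μ := by
      obtain ⟨⟨i, j⟩, hij⟩ := Finset.card_pos.1 hμ
      exact μ.up_left_mem (Nat.zero_le _) (Nat.zero_le _) hij
    have hcpos : 0 < c := YoungDiagram.mem_iff_lt_colLen.1 h00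
    -- bound on rows
    have hrow : ∀ i j : ℕ, (i, j) ∈ μ → i < c := by
      intro i j hij
      exact lt_of_lt_of_le (YoungDiagram.mem_iff_lt_colLen.1 hij) (μ.colLen_anti 0 j (Nat.zero_le _))
    -- the minimal tableau
    let Tmin : SemistandardYoungTableau μ :=
      ⟨fun i j => if (i, j) ∈ μ then i else 0,
       by intro i j1 j2 hj h2
          rw [if_pos h2, if_pos (μ.up_left_mem le_rfl hj.le h2)],
       by intro i1 i2 j hi h2
          rw [if_pos h2, if_pos (μ.up_left_mem hi.le le_rfl h2)]; exact hi,
       by intro i j h; simp only [if_neg h]⟩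
    have hTmin : ∀ i j : ℕ, (i, j) ∈ μ → Tmin i j = i := by
      intro i j hij; show (if (i, j) ∈ μ then i else 0) = i; rw [if_pos hij]
    -- the tableau with last row bumped to value c
    let T1 : SemistandardYoungTableau μ :=
      ⟨fun i j => if (i, j) ∈ μ then (if i = c - 1 then c else i) else 0,
       by intro i j1 j2 hj h2
          rw [if_pos h2, if_pos (μ.up_left_mem le_rfl hj.le h2)],
       by intro i1 i2 j hi h2
          have h1 : (i1, j) ∈ μ := μ.up_left_mem hi.le le_rfl h2
          have hi2 : i2 < c := hrow i2 j h2
          rw [if_pos h2, if_pos h1]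
          split <;> split <;> omega,
       by intro i j h; simp only [if_neg h]⟩
    have hT1 : ∀ i j : ℕ, (i, j) ∈ μ → T1 i j = if i = c - 1 then c else i := by
      intro i j hij
      show (if (i, j) ∈ μ then (if i = c - 1 then c else i) else 0) = _
      rw [if_pos hij]
    have hnoTmin : ∀ Q' : SemistandardYoungTableau μ, ¬ Step μ Tmin Q' := by
      apply noStepLemma
      · intro i hi; exact hTmin i 0 (YoungDiagram.mem_iff_lt_colLen.2 hi)
      · intro i j hij; rw [hTmin i j hij]; exact hrow i j hij
    have hmemc1 : (c - 1, 0) ∈ μ := YoungDiagram.mem_iff_lt_colLen.2 (by omega)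
    have hstep : Step μ T1 Tmin := by
      refine ⟨c, hcpos, ⟨c - 1, 0, hmemc1, by rw [hT1 _ _ hmemc1]; simp⟩, ?_, ?_⟩
      · intro i j i' j' hij hij' hv hv1
        rw [hT1 _ _ hij'] at hv1
        have := hrow i' j' hij'
        split at hv1 <;> omega
      · intro i j hij
        rw [hT1 _ _ hij, hTmin _ _ hij]
        have := hrow i j hij
        by_cases hic : i = c - 1
        · rw [if_pos hic, if_pos rfl]; omega
        · rw [if_neg hic, if_neg (by omega)]
    have hd1 : IsDst μ T1 Tmin :=
      ⟨Relation.ReflTransGen.single hstep, hnoTmin⟩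
    have hd2 : IsDst μ Tmin Tmin :=
      ⟨Relation.ReflTransGen.refl, hnoTmin⟩
    have hE1 : EntryLE μ T1 n := by
      intro i j hij
      rw [hT1 _ _ hij]
      have := hrow i j hij
      split <;> omega
    have hE2 : EntryLE μ Tmin n := by
      intro i j hij
      rw [hTmin _ _ hij]
      have := hrow i j hij
      omega
    have := hinj T1 Tmin Tmin hE1 hE2 hd1 hd2
    have h1 := hT1 (c - 1) 0 hmemc1
    have h2 := hTmin (c - 1) 0 hmemc1
    rw [this] at h1
    simp at h1
    omega
  · -- n ≤ colLen 0 → injectivity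
    intro hn T1 T2 Q hE1 hE2 hd1 hd2
    set c := μ.colLen 0 with hc
    have hmemc1 : (c - 1, 0) ∈ μ := by
      have h00 : (0, 0) ∈ μ := by
        obtain ⟨⟨i, j⟩, hij⟩ := Finset.card_pos.1 hμ
        exact μ.up_left_mem (Nat.zero_le _) (Nat.zero_le _) hij
      have := YoungDiagram.mem_iff_lt_colLen.1 h00
      exact YoungDiagram.mem_iff_lt_colLen.2 (by omega)
    have key : ∀ (T : SemistandardYoungTableau μ), EntryLE μ T n →
        ∀ i : ℕ, i < c → T i 0 = i := by
      intro T hE i hi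
      have hmemi : (i, 0) ∈ μ := YoungDiagram.mem_iff_lt_colLen.2 hi
      have hlow : i ≤ T i 0 := by
        have := colGap μ T i 0 (by simpa using hmemi)
        simp only [Nat.zero_add] at this
        omega
      have hhigh : T i 0 + (c - 1 - i) ≤ T (c - 1) 0 := by
        have := colGap μ T (c - 1 - i) i (by
          have : i + (c - 1 - i) = c - 1 := by omega
          rw [this]; exact hmemc1)
        have heq : i + (c - 1 - i) = c - 1 := by omega
        rwa [heq] at this
      have htop : T (c - 1) 0 < n := hE (c - 1) 0 hmemc1
      omega
    have hno1 : ∀ Q' : SemistandardYoungTableau μ, ¬ Step μ T1 Q' :=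
      noStepLemma μ T1 (fun i hi => key T1 hE1 i hi)
        (fun i j hij => lt_of_lt_of_le (hE1 i j hij) hn)
    have hno2 : ∀ Q' : SemistandardYoungTableau μ, ¬ Step μ T2 Q' :=
      noStepLemma μ T2 (fun i hi => key T2 hE2 i hi)
        (fun i j hij => lt_of_lt_of_le (hE2 i j hij) hn)
    have e1 := dst_eq_self μ T1 Q hno1 hd1
    have e2 := dst_eq_self μ T2 Q hno2 hd2
    rw [← e1, ← e2]
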